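/- Let V be a vector space over a field, W a subspace, and S(W) a subsemigroup of L(W). Then L_{S(W)}(V) is a regular semigroup if and only if either (i) S(W) is a subgroup of Aut(W), or (ii) S(W) is regular and W = V. -/

import Mathlib

open Set

/-- `S` is a subsemigroup of `L(M)` (closed under composition). -/
def LIsSubsemigroup {K M : Type*} [Field K] [AddCommGroup M] [Module K M]
    (S : Set (M →ₗ[K] M)) : Prop :=
  ∀ a ∈ S, ∀ b ∈ S, a ∘ₗ b ∈ S

/-- `S` is a subgroup of `Aut(M)`. -/
def LIsSubgroupOfAut {K M : Type*} [Field K] [AddCommGroup M] [Module K M]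
    (S : Set (M →ₗ[K] M)) : Prop :=
  LIsSubsemigroup S ∧ (∀ a ∈ S, Function.Bijective a) ∧ (LinearMap.id ∈ S) ∧
    ∀ a ∈ S, ∃ b ∈ S, a ∘ₗ b = LinearMap.id ∧ b ∘ₗ a = LinearMap.id

/-- `S` is a regular semigroup of linear maps: `∀ a ∈ S, ∃ b ∈ S, aba = a`
(composed left to right, i.e. `x ↦ a (b (a x))`). -/
def LIsRegularOn {K M : Type*} [Field K] [AddCommGroup M] [Module K M]
    (S : Set (M →ₗ[K] M)) : Prop :=
  ∀ a ∈ S, ∃ b ∈ S, a ∘ₗ b ∘ₗ a = a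

/-- `S` is an inverse semigroup of linear maps. -/
def LIsInverseOn {K M : Type*} [Field K] [AddCommGroup M] [Module K M]
    (S : Set (M →ₗ[K] M)) : Prop :=
  ∀ a ∈ S, ∃! b, b ∈ S ∧ a ∘ₗ b ∘ₗ a = a ∧ b ∘ₗ a ∘ₗ b = b

/-- `u` is a unit of the linear monoid `S`. -/
def LIsUnitOn {K M : Type*} [Field K] [AddCommGroup M] [Module K M]
    (S : Set (M →ₗ[K] M)) (u : M →ₗ[K] M) : Prop :=
  u ∈ S ∧ ∃ v ∈ S, u ∘ₗ v = LinearMap.id ∧ v ∘ₗ u = LinearMap.id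

/-- `a` is a unit-regular element of `S`. -/
def LUnitRegularElem {K M : Type*} [Field K] [AddCommGroup M] [Module K M]
    (S : Set (M →ₗ[K] M)) (a : M →ₗ[K] M) : Prop :=
  ∃ u, LIsUnitOn S u ∧ a ∘ₗ u ∘ₗ a = a

/-- `S` is a unit-regular linear monoid. -/
def LIsUnitRegularOn {K M : Type*} [Field K] [AddCommGroup M] [Module K M]
    (S : Set (M →ₗ[K] M)) : Prop :=
  ∀ a ∈ S, LUnitRegularElem S a

/-- `G` is a subgroup contained in the semigroup `S` of linear maps. -/
def LIsSubgroupIn {K M : Type*} [Field K] [AddCommGroup M] [Module K M]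
    (S G : Set (M →ₗ[K] M)) : Prop :=
  G ⊆ S ∧ (∀ a ∈ G, ∀ b ∈ G, a ∘ₗ b ∈ G) ∧
    ∃ e ∈ G, (∀ a ∈ G, a ∘ₗ e = a ∧ e ∘ₗ a = a) ∧
      ∀ a ∈ G, ∃ b ∈ G, a ∘ₗ b = e ∧ b ∘ₗ a = e

/-- `S` is a completely regular semigroup of linear maps: every element
belongs to a subgroup of `S`. -/
def LIsCompletelyRegularOn {K M : Type*} [Field K] [AddCommGroup M] [Module K M]
    (S : Set (M →ₗ[K] M)) : Prop :=
  ∀ a ∈ S, ∃ G, LIsSubgroupIn S G ∧ a ∈ G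

/-- The semigroup `L_{S(W)}(V)` of all linear self-maps of `V` that leave `W`
invariant and whose restriction to `W` lies in `S`. -/
def LSemi {K V : Type*} [Field K] [AddCommGroup V] [Module K V] (W : Submodule K V)
    (S : Set (W →ₗ[K] W)) : Set (V →ₗ[K] V) :=
  {f | ∃ h : ∀ x ∈ W, f x ∈ W, f.restrict h ∈ S}

section StmtAux

variable {K V : Type*} [Field K] [AddCommGroup V] [Module K V]

private lemma aux_reg (W : Submodule K V) (S : Set (W →ₗ[K] W)) (hreg : LIsRegularOn (LSemi W S)) : LIsRegularOn S := by
  intro a ha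
  obtain ⟨U, hU⟩ := W.exists_isCompl
  set π := W.projectionOnto U hU with hπ
  set f : V →ₗ[K] V := W.subtype ∘ₗ a.comp π with hf
  have hfW : ∀ x ∈ W, f x ∈ W := fun x _ => (a (π x)).2
  have key : ∀ z : W, f ↑z = ↑(a z) := fun z => by
    simp [hf, hπ]
  have hfr : f.restrict hfW = a := by
    ext w
    rw [LinearMap.restrict_coe_apply, key]
  obtain ⟨g, ⟨hgW, hb⟩, hfgf⟩ := hreg f ⟨hfW, hfr ▸ ha⟩
  set b := g.restrict hgW with hbdef
  have keyg : ∀ z : W, g ↑z = ↑(b z) := fun z => (g.restrict_coe_apply hgW z).symm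
  refine ⟨b, hb, ?_⟩
  ext w

  have : (a ∘ₗ b ∘ₗ a) w = a (b (a w)) := rfl
  have h1 : f (g (f (w : V))) = f ↑w := by
    have := DFunLike.congr_fun hfgf (w : V)
    simpa using this
  rw [this, ← key, ← keyg, ← key, h1, key]

private lemma aux_surj (W : Submodule K V) (S : Set (W →ₗ[K] W)) (hreg : LIsRegularOn (LSemi W S)) (hW : W ≠ ⊤) :
    ∀ a ∈ S, Function.Surjective a := by
  intro a ha
  by_contra hsur
  obtain ⟨w₀, hw₀⟩ : ∃ w₀, ∀ x, a x ≠ w₀ := by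
    unfold Function.Surjective at hsur
    push_neg at hsur
    exact hsur
  obtain ⟨v, hv⟩ : ∃ v, v ∉ W := by
    by_contra h
    push_neg at h
    exact hW (eq_top_iff.2 fun x _ => h x)
  have hq : W.mkQ v ≠ 0 := by
    intro h
    exact hv ((Submodule.Quotient.mk_eq_zero W).1 (by simpa using h))
  obtain ⟨χ₀, hχ₀⟩ : ∃ φ : Module.Dual K (V ⧸ W), φ (W.mkQ v) ≠ 0 := by
    by_contra h
    push_neg at h
    exact hq ((Module.forall_dual_apply_eq_zero_iff K _).1 h)
  set ψ : V →ₗ[K] K := (χ₀ (W.mkQ v))⁻¹ • (χ₀ ∘ₗ W.mkQ) with hψdef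
  have hψv : ψ v = 1 := by
    simp only [hψdef, LinearMap.smul_apply, LinearMap.comp_apply, smul_eq_mul]
    exact inv_mul_cancel₀ hχ₀
  have hψW : ∀ x ∈ W, ψ x = 0 := by
    intro x hx
    simp [hψdef, (Submodule.Quotient.mk_eq_zero W).2 hx]
  obtain ⟨U, hU⟩ := W.exists_isCompl
  set π := W.projectionOnto U hU with hπ
  set f : V →ₗ[K] V := W.subtype ∘ₗ a.comp π + ψ.smulRight (w₀ : V) with hf
  have hfapp : ∀ x, f x = ↑(a (π x)) + ψ x • (w₀ : V) := fun x => rfl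
  have hfW : ∀ x ∈ W, f x ∈ W := by
    intro x hx
    rw [hfapp, hψW x hx, zero_smul, add_zero]
    exact (a (π x)).2
  have key : ∀ z : W, f ↑z = ↑(a z) := fun z => by
    rw [hfapp, hψW _ z.2, zero_smul, add_zero, hπ]
    simp
  have hfr : f.restrict hfW = a := by
    ext w
    rw [LinearMap.restrict_coe_apply, key]
  obtain ⟨g, ⟨hgW, hb⟩, hfgf⟩ := hreg f ⟨hfW, hfr ▸ ha⟩
  set b := g.restrict hgW with hbdef
  have keyg : ∀ z : W, g ↑z = ↑(b z) := fun z => (g.restrict_coe_apply hgW z).symm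
  have hfv : f v = ↑(a (π v)) + ↑w₀ := by rw [hfapp, hψv, one_smul]
  have hfvW : f v ∈ W := by
    rw [hfv]; exact W.add_mem (a (π v)).2 w₀.2
  set m : W := ⟨f v, hfvW⟩ with hm
  have h1 : f (g (f v)) = f v := by
    have := DFunLike.congr_fun hfgf v
    simpa using this
  have h2 : (↑(a (b m)) : V) = ↑(a (π v)) + ↑w₀ := by
    rw [← key, ← keyg]
    show f (g ↑m) = _
    rw [hm]
    exact h1.trans hfv
  have h3 : a (b m - π v) = w₀ := by
    apply Subtype.ext
    rw [map_sub]
    push_cast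
    rw [h2]
    abel
  exact hw₀ _ h3

private lemma aux_group {M : Type*} [AddCommGroup M] [Module K M] {S : Set (M →ₗ[K] M)} (hSne : S.Nonempty) (hS : LIsSubsemigroup S)
    (hreg : LIsRegularOn S) (hsurj : ∀ a ∈ S, Function.Surjective a) :
    LIsSubgroupOfAut S := by
  have hright : ∀ a ∈ S, ∃ b ∈ S, a ∘ₗ b = LinearMap.id := by
    intro a ha
    obtain ⟨b, hb, hab⟩ := hreg a ha
    refine ⟨b, hb, ?_⟩
    ext y
    obtain ⟨x, rfl⟩ := hsurj a ha y
    have := DFunLike.congr_fun hab x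
    simpa using this
  have hinv : ∀ a ∈ S, ∃ b ∈ S, a ∘ₗ b = LinearMap.id ∧ b ∘ₗ a = LinearMap.id := by
    intro a ha
    obtain ⟨b, hb, hab⟩ := hright a ha
    obtain ⟨c, hc, hbc⟩ := hright b hb
    have hba : b ∘ₗ a = LinearMap.id := by
      calc b ∘ₗ a = (b ∘ₗ a) ∘ₗ (b ∘ₗ c) := by rw [hbc, LinearMap.comp_id]
        _ = b ∘ₗ (a ∘ₗ b) ∘ₗ c := by rw [LinearMap.comp_assoc, LinearMap.comp_assoc]
        _ = b ∘ₗ c := by rw [hab, LinearMap.id_comp]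
        _ = LinearMap.id := hbc
    exact ⟨b, hb, hab, hba⟩
  refine ⟨hS, ?_, ?_, hinv⟩
  · intro a ha
    obtain ⟨b, hb, hab, hba⟩ := hinv a ha
    constructor
    · have : ∀ x, b (a x) = x := fun x => by
        have := DFunLike.congr_fun hba x; simpa using this
      exact Function.LeftInverse.injective this
    · have : ∀ x, a (b x) = x := fun x => by
        have := DFunLike.congr_fun hab x; simpa using this
      exact Function.RightInverse.surjective this
  · obtain ⟨a, ha⟩ := hSne
    obtain ⟨b, hb, hab, _⟩ := hinv a ha
    exact hab ▸ hS a ha b hb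

private lemma aux_top {S : Set ((⊤ : Submodule K V) →ₗ[K] (⊤ : Submodule K V))}
    (hreg : LIsRegularOn S) : LIsRegularOn (LSemi ⊤ S) := by
  intro f hf
  obtain ⟨hfW, haS⟩ := hf
  set a := f.restrict hfW with hadef
  obtain ⟨b, hbS, hk⟩ := hreg a haS
  set π : V →ₗ[K] (⊤ : Submodule K V) :=
    LinearMap.codRestrict ⊤ LinearMap.id (fun _ => Submodule.mem_top) with hπ
  set g : V →ₗ[K] V := (⊤ : Submodule K V).subtype ∘ₗ b ∘ₗ π with hg
  have hπw : ∀ z : (⊤ : Submodule K V), π ↑z = z := fun z => Subtype.ext rfl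
  have hgapp : ∀ x, g x = ↑(b (π x)) := fun _ => rfl
  have hgW' : ∀ x ∈ (⊤ : Submodule K V), g x ∈ (⊤ : Submodule K V) := fun _ _ => Submodule.mem_top
  have keyg : ∀ z : (⊤ : Submodule K V), g ↑z = ↑(b z) := fun z => by
    rw [hgapp, hπw]
  have keyf : ∀ z : (⊤ : Submodule K V), f ↑z = ↑(a z) :=
    fun z => (f.restrict_coe_apply hfW z).symm
  have hgr : g.restrict hgW' = b := by
    ext w
    rw [LinearMap.restrict_coe_apply, keyg]
  refine ⟨g, ⟨hgW', hgr ▸ hbS⟩, ?_⟩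
  ext x
  show f (g (f x)) = f x
  have hx : x = ↑(⟨x, Submodule.mem_top⟩ : (⊤ : Submodule K V)) := rfl
  rw [hx, keyf, keyg, keyf]
  have := DFunLike.congr_fun hk (⟨x, Submodule.mem_top⟩ : (⊤ : Submodule K V))
  simp only [LinearMap.comp_apply] at this
  rw [this]

private lemma aux_grp_reg {W : Submodule K V} {S : Set (W →ₗ[K] W)} (hgrp : LIsSubgroupOfAut S) : LIsRegularOn (LSemi W S) := by
  obtain ⟨hclosed, hbij, hid, hinv⟩ := hgrp
  intro f hf
  obtain ⟨hfW, haS⟩ := hf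
  set a := f.restrict hfW with hadef
  obtain ⟨b, hbS, hab, hba⟩ := hinv a haS
  obtain ⟨U, hU⟩ := W.exists_isCompl
  set π := W.linearProjOfIsCompl U hU with hπdef
  set e : V →ₗ[K] V := W.subtype ∘ₗ b.comp π with hedef
  set P : V →ₗ[K] V := W.subtype ∘ₗ π with hPdef
  set R := LinearMap.range f with hRdef
  obtain ⟨D, hD⟩ := R.exists_isCompl
  set ρ := R.linearProjOfIsCompl D hD with hρdef
  obtain ⟨t, ht⟩ := f.rangeRestrict.exists_rightInverse_of_surjective
    (LinearMap.range_rangeRestrict f)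
  have htf : ∀ y : R, f (t y) = ↑y := by
    intro y
    have := DFunLike.congr_fun ht y
    simpa [LinearMap.rangeRestrict, Subtype.ext_iff] using this
  set g : V →ₗ[K] V :=
    e + (LinearMap.id - e ∘ₗ f) ∘ₗ t ∘ₗ ρ ∘ₗ (LinearMap.id - P) with hgdef
  have hπleft : ∀ z : W, π (↑z : V) = z := fun z =>
    Submodule.linearProjOfIsCompl_apply_left hU z
  have keyf : ∀ z : W, f ↑z = ↑(a z) := fun z => (f.restrict_coe_apply hfW z).symm
  have habfun : ∀ w : W, a (b w) = w := fun w => by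
    have := DFunLike.congr_fun hab w
    simpa using this
  have heapp : ∀ y, e y = ↑(b (π y)) := fun _ => rfl
  have hPapp : ∀ y, P y = ↑(π y) := fun _ => rfl
  have hfe : ∀ y, f (e y) = P y := by
    intro y
    rw [heapp, keyf, habfun, hPapp]
  have hgapp : ∀ y, g y = e y + (t (ρ (y - P y)) - e (f (t (ρ (y - P y))))) := by
    intro y
    simp [hgdef, LinearMap.sub_apply, LinearMap.comp_apply]
  have hPW : ∀ x ∈ W, P x = x := by
    intro x hx
    have : π x = ⟨x, hx⟩ := hπleft ⟨x, hx⟩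
    rw [hPapp, this]
  have keyg : ∀ z : W, g ↑z = ↑(b z) := by
    intro z
    have h0 : (↑z : V) - P ↑z = 0 := by rw [hPW _ z.2, sub_self]
    rw [hgapp, h0, map_zero, map_zero, map_zero, map_zero, sub_zero, heapp, hπleft]
    rw [add_zero]
  have hgW : ∀ x ∈ W, g x ∈ W := by
    intro x hx
    have : g x = ↑(b ⟨x, hx⟩) := keyg ⟨x, hx⟩
    rw [this]
    exact (b ⟨x, hx⟩).2
  have hgr : g.restrict hgW = b := by
    ext w
    rw [LinearMap.restrict_coe_apply, keyg]
  refine ⟨g, ⟨hgW, hgr ▸ hbS⟩, ?_⟩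
  ext x
  show f (g (f x)) = f x
  set y := f x with hy
  have hyR : y ∈ R := ⟨x, rfl⟩
  have hPyR : P y ∈ R := by
    rw [← hfe y]; exact ⟨e y, rfl⟩
  have hsubR : y - P y ∈ R := sub_mem hyR hPyR
  have hρy : ρ (y - P y) = ⟨y - P y, hsubR⟩ :=
    Submodule.linearProjOfIsCompl_apply_left hD ⟨y - P y, hsubR⟩
  have hfz : f (t (ρ (y - P y))) = y - P y := by
    rw [hρy, htf]
  have hePy : e (P y) = e y := by
    have : π (P y) = π y := by
      rw [hPapp]; exact hπleft (π y)
    rw [heapp, heapp, this]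
  have hefz : e (f (t (ρ (y - P y)))) = 0 := by
    rw [hfz, map_sub, hePy, sub_self]
  have hgy : g y = e y + t (ρ (y - P y)) := by
    rw [hgapp, hefz, sub_zero]
  rw [hgy, map_add, hfe, hfz]
  abel


end StmtAux

theorem stmt11 {K V : Type*} [Field K] [AddCommGroup V] [Module K V]
    (W : Submodule K V) (S : Set (W →ₗ[K] W)) (hSne : S.Nonempty)
    (hS : LIsSubsemigroup S) :
    LIsRegularOn (LSemi W S) ↔
      (LIsSubgroupOfAut S ∨ (LIsRegularOn S ∧ W = ⊤)) := by
  constructor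
  · intro hreg
    by_cases hW : W = ⊤
    · subst hW
      exact Or.inr ⟨aux_reg _ _ hreg, rfl⟩
    · refine Or.inl (aux_group hSne hS (aux_reg _ _ hreg) (aux_surj _ _ hreg hW))
  · rintro (hgrp | ⟨hreg, hW⟩)
    · exact aux_grp_reg hgrp
    · subst hW
      exact aux_top hreg
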